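/- arXiv:1207.1793 — 5 statements merged into one kernel-verified Lean document; each statement's English description precedes it below -/
import Mathlib

section
/- Let a, b, c be nonzero vectors in ℝ³ with a + b + c = 0 (the oriented sides of a triangle with vertices x, y, z, i.e. a = z - y, b = x - z, c = y - x). If the normalized sum a/|a| + b/|b| + c/|c| = 0, then |a| = |b| = |c| (the triangle is equilateral). -/
open scoped InnerProductSpace

noncomputable section

abbrev E3 := EuclideanSpace ℝ (Fin 3)

/-- The cross product on ℝ³. -/
def cross3 (a b : E3) : E3 :=
  WithLp.toLp 2 ![a 1 * b 2 - a 2 * b 1, a 2 * b 0 - a 0 * b 2, a 0 * b 1 - a 1 * b 0]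

lemma key_inner (x y z : E3) (hx : x ≠ 0) (hy : y ≠ 0) (hz : z ≠ 0)
    (h : ‖x‖⁻¹ • x + ‖y‖⁻¹ • y + ‖z‖⁻¹ • z = 0) :
    ⟪x, y⟫_ℝ = -(‖x‖ * ‖y‖) / 2 := by
  have hx' : (0:ℝ) < ‖x‖ := norm_pos_iff.mpr hx
  have hy' : (0:ℝ) < ‖y‖ := norm_pos_iff.mpr hy
  have hz' : (0:ℝ) < ‖z‖ := norm_pos_iff.mpr hz
  have hu : ‖‖x‖⁻¹ • x‖ = 1 := by
    rw [norm_smul, norm_inv, norm_norm]; field_simp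
  have hv : ‖‖y‖⁻¹ • y‖ = 1 := by
    rw [norm_smul, norm_inv, norm_norm]; field_simp
  have hw : ‖‖z‖⁻¹ • z‖ = 1 := by
    rw [norm_smul, norm_inv, norm_norm]; field_simp
  have hsum2 : ‖x‖⁻¹ • x + ‖y‖⁻¹ • y = -(‖z‖⁻¹ • z) := by
    rw [eq_neg_iff_add_eq_zero]; exact h
  have h1 : ‖‖x‖⁻¹ • x + ‖y‖⁻¹ • y‖ = 1 := by rw [hsum2, norm_neg, hw]
  have h2 := norm_add_sq_real (‖x‖⁻¹ • x) (‖y‖⁻¹ • y)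
  rw [h1, hu, hv, real_inner_smul_left, real_inner_smul_right] at h2
  have hx0 : ‖x‖ ≠ 0 := ne_of_gt hx'
  have hy0 : ‖y‖ ≠ 0 := ne_of_gt hy'
  set p := ⟪x, y⟫_ℝ with hp
  have h3 : ‖x‖⁻¹ * (‖y‖⁻¹ * p) = -1/2 := by nlinarith
  have h4 : ‖x‖ * (‖y‖ * (‖x‖⁻¹ * (‖y‖⁻¹ * p))) = ‖x‖ * (‖y‖ * (-1/2)) := by rw [h3]
  field_simp at h4
  nlinarith [mul_pos hx' hy']

set_option maxHeartbeats 1000000 in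
theorem stmt0 (a b c : E3) (ha : a ≠ 0) (hb : b ≠ 0) (hc : c ≠ 0)
    (hsum : a + b + c = 0)
    (hunit : ‖a‖⁻¹ • a + ‖b‖⁻¹ • b + ‖c‖⁻¹ • c = 0) :
    ‖a‖ = ‖b‖ ∧ ‖b‖ = ‖c‖ := by
  have hα : (0:ℝ) < ‖a‖ := norm_pos_iff.mpr ha
  have hβ : (0:ℝ) < ‖b‖ := norm_pos_iff.mpr hb
  have hγ : (0:ℝ) < ‖c‖ := norm_pos_iff.mpr hc
  have pab := key_inner a b c ha hb hc hunit
  have pbc := key_inner b c a hb hc ha (by rw [← hunit]; abel)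
  have pac := key_inner a c b ha hc hb (by rw [← hunit]; abel)
  have pba := key_inner b a c hb ha hc (by rw [← hunit]; abel)
  have ea : ⟪a, a + b + c⟫_ℝ = 0 := by rw [hsum, inner_zero_right]
  have eb : ⟪b, a + b + c⟫_ℝ = 0 := by rw [hsum, inner_zero_right]
  have ec : ⟪c, a + b + c⟫_ℝ = 0 := by rw [hsum, inner_zero_right]
  have pca := key_inner c a b hc ha hb (by rw [← hunit]; abel)
  have pcb := key_inner c b a hc hb ha (by rw [← hunit]; abel)
  rw [inner_add_right, inner_add_right, real_inner_self_eq_norm_sq, pab, pac] at ea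
  rw [inner_add_right, inner_add_right, real_inner_self_eq_norm_sq, pba, pbc] at eb
  rw [inner_add_right, inner_add_right, real_inner_self_eq_norm_sq, pca, pcb] at ec
  have e1 : 2 * ‖a‖ - ‖b‖ - ‖c‖ = 0 := by
    rcases mul_eq_zero.mp (show ‖a‖ * (2 * ‖a‖ - ‖b‖ - ‖c‖) = 0 by nlinarith) with h | h
    · exact absurd h (ne_of_gt hα)
    · exact h
  have e2 : 2 * ‖b‖ - ‖a‖ - ‖c‖ = 0 := by
    rcases mul_eq_zero.mp (show ‖b‖ * (2 * ‖b‖ - ‖a‖ - ‖c‖) = 0 by nlinarith) with h | h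
    · exact absurd h (ne_of_gt hβ)
    · exact h
  have e3 : 2 * ‖c‖ - ‖a‖ - ‖b‖ = 0 := by
    rcases mul_eq_zero.mp (show ‖c‖ * (2 * ‖c‖ - ‖a‖ - ‖b‖) = 0 by nlinarith) with h | h
    · exact absurd h (ne_of_gt hγ)
    · exact h
  constructor <;> linarith
end
end

section
/- Let x, y, z be three distinct points in ℝ³ with side vectors a = z - y, b = x - z, c = y - x. Then the vector F(x,y,z) = a/|a| + b/|b| + c/|c| + (b×c)/(|b||c|) + (c×a)/(|c||a|) + (a×b)/(|a||b|) is nonzero. -/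
open scoped InnerProductSpace

noncomputable section

/-- The key map F on configurations of three distinct points, defined from the
side vectors a = z - y, b = x - z, c = y - x of the triangle xyz. -/
def Fkey (x y z : E3) : E3 :=
  (‖z - y‖⁻¹ • (z - y) + ‖x - z‖⁻¹ • (x - z) + ‖y - x‖⁻¹ • (y - x)) +
    ((‖x - z‖ * ‖y - x‖)⁻¹ • cross3 (x - z) (y - x) +
      (‖y - x‖ * ‖z - y‖)⁻¹ • cross3 (y - x) (z - y) +
      (‖z - y‖ * ‖x - z‖)⁻¹ • cross3 (z - y) (x - z))

/-- Final scalar contradiction. -/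
lemma key2 (na nb nc P : ℝ) (hna : 0 < na) (hnb : 0 < nb) (hnc : 0 < nc)
    (hC0 : nb*nc*na^2 + na*nc*nb^2 + P*(nb*nc + na*nc - 2*(na*nb)) - na*nb*na^2 - na*nb*nb^2 = 0)
    (hD : (na+nb+nc)*(na^2*nb^2 - P^2) = 0)
    (hc2 : nc^2 = na^2 + nb^2 + 2*P) : False := by
  have h1 : na^2*nb^2 - P^2 = 0 := by
    rcases mul_eq_zero.mp hD with h | h
    · linarith
    · exact h
  have h2 : (P - na*nb)*(P + na*nb) = 0 := by linear_combination -h1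
  rcases mul_eq_zero.mp h2 with h | h
  · have hP : P = na*nb := by linarith
    subst hP
    have h3 : na*nb*(na+nb)*(2*nc - na - nb) = 0 := by linear_combination hC0
    have h5 : (nc - (na+nb))*(nc + (na+nb)) = 0 := by linear_combination hc2
    have h6 : nc = na + nb := by
      rcases mul_eq_zero.mp h5 with h' | h'
      · linarith
      · linarith
    nlinarith [mul_pos (mul_pos (mul_pos hna hnb)
        (show (0:ℝ) < na + nb by linarith))
        (show (0:ℝ) < 2*nc - na - nb by linarith)]
  · have hP : P = -(na*nb) := by linarith
    subst hP
    have h3 : na*nb*(na-nb)^2 = 0 := by linear_combination -hC0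
    have h4 : (na-nb)^2 = 0 := by
      rcases mul_eq_zero.mp h3 with h' | h'
      · nlinarith
      · exact h'
    have h5 : nc^2 = 0 := by linear_combination hc2 + h4
    nlinarith

/-- Coordinate form of the main argument. -/
lemma key1 (a0 a1 a2 b0 b1 b2 c0 c1 c2 na nb nc : ℝ)
    (hna : 0 < na) (hnb : 0 < nb) (hnc : 0 < nc)
    (hna2 : na^2 = a0^2 + a1^2 + a2^2) (hnb2 : nb^2 = b0^2 + b1^2 + b2^2)
    (hnc2 : nc^2 = c0^2 + c1^2 + c2^2)
    (hc0 : c0 = -(a0+b0)) (hc1 : c1 = -(a1+b1)) (hc2 : c2 = -(a2+b2))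
    (e0 : na⁻¹ * a0 + nb⁻¹ * b0 + nc⁻¹ * c0 +
      ((nb*nc)⁻¹ * (b1*c2 - b2*c1) + (nc*na)⁻¹ * (c1*a2 - c2*a1) +
        (na*nb)⁻¹ * (a1*b2 - a2*b1)) = 0)
    (e1 : na⁻¹ * a1 + nb⁻¹ * b1 + nc⁻¹ * c1 +
      ((nb*nc)⁻¹ * (b2*c0 - b0*c2) + (nc*na)⁻¹ * (c2*a0 - c0*a2) +
        (na*nb)⁻¹ * (a2*b0 - a0*b2)) = 0)
    (e2 : na⁻¹ * a2 + nb⁻¹ * b2 + nc⁻¹ * c2 +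
      ((nb*nc)⁻¹ * (b0*c1 - b1*c0) + (nc*na)⁻¹ * (c0*a1 - c1*a0) +
        (na*nb)⁻¹ * (a0*b1 - a1*b0)) = 0)
    : False := by
  subst hc0 hc1 hc2
  have hna' : na ≠ 0 := ne_of_gt hna
  have hnb' : nb ≠ 0 := ne_of_gt hnb
  have hnc' : nc ≠ 0 := ne_of_gt hnc
  have E0 : nb*nc*a0 + na*nc*b0 - na*nb*(a0+b0) + (na+nb+nc)*(a1*b2 - a2*b1) = 0 := by
    have h : nb*nc*a0 + na*nc*b0 - na*nb*(a0+b0) + (na+nb+nc)*(a1*b2 - a2*b1) =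
        (na*(nb*nc)) * (na⁻¹ * a0 + nb⁻¹ * b0 + nc⁻¹ * (-(a0+b0)) +
          ((nb*nc)⁻¹ * (b1*(-(a2+b2)) - b2*(-(a1+b1))) +
            (nc*na)⁻¹ * ((-(a1+b1))*a2 - (-(a2+b2))*a1) +
            (na*nb)⁻¹ * (a1*b2 - a2*b1))) := by
      field_simp
      ring
    rw [h, e0, mul_zero]
  have E1 : nb*nc*a1 + na*nc*b1 - na*nb*(a1+b1) + (na+nb+nc)*(a2*b0 - a0*b2) = 0 := by
    have h : nb*nc*a1 + na*nc*b1 - na*nb*(a1+b1) + (na+nb+nc)*(a2*b0 - a0*b2) =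
        (na*(nb*nc)) * (na⁻¹ * a1 + nb⁻¹ * b1 + nc⁻¹ * (-(a1+b1)) +
          ((nb*nc)⁻¹ * (b2*(-(a0+b0)) - b0*(-(a2+b2))) +
            (nc*na)⁻¹ * ((-(a2+b2))*a0 - (-(a0+b0))*a2) +
            (na*nb)⁻¹ * (a2*b0 - a0*b2))) := by
      field_simp
      ring
    rw [h, e1, mul_zero]
  have E2 : nb*nc*a2 + na*nc*b2 - na*nb*(a2+b2) + (na+nb+nc)*(a0*b1 - a1*b0) = 0 := by
    have h : nb*nc*a2 + na*nc*b2 - na*nb*(a2+b2) + (na+nb+nc)*(a0*b1 - a1*b0) =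
        (na*(nb*nc)) * (na⁻¹ * a2 + nb⁻¹ * b2 + nc⁻¹ * (-(a2+b2)) +
          ((nb*nc)⁻¹ * (b0*(-(a1+b1)) - b1*(-(a0+b0))) +
            (nc*na)⁻¹ * ((-(a0+b0))*a1 - (-(a1+b1))*a0) +
            (na*nb)⁻¹ * (a0*b1 - a1*b0))) := by
      field_simp
      ring
    rw [h, e2, mul_zero]
  set P := a0*b0 + a1*b1 + a2*b2 with hPdef
  have hC0 : nb*nc*na^2 + na*nc*nb^2 + P*(nb*nc + na*nc - 2*(na*nb)) - na*nb*na^2 - na*nb*nb^2 = 0 := by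
    linear_combination (a0+b0)*E0 + (a1+b1)*E1 + (a2+b2)*E2 +
      (nb*nc - na*nb)*hna2 + (na*nc - na*nb)*hnb2
  have hlag : (a1*b2 - a2*b1)^2 + (a2*b0 - a0*b2)^2 + (a0*b1 - a1*b0)^2 =
      na^2*nb^2 - P^2 := by
    linear_combination (-(b0^2+b1^2+b2^2))*hna2 - na^2*hnb2
  have hD : (na+nb+nc)*(na^2*nb^2 - P^2) = 0 := by
    linear_combination (a1*b2 - a2*b1)*E0 + (a2*b0 - a0*b2)*E1 + (a0*b1 - a1*b0)*E2 +
      (-(na+nb+nc))*hlag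
  have hc2' : nc^2 = na^2 + nb^2 + 2*P := by
    linear_combination hnc2 - hna2 - hnb2
  exact key2 na nb nc P hna hnb hnc hC0 hD hc2'

theorem stmt2 (x y z : E3) (hxy : x ≠ y) (hyz : y ≠ z) (hxz : x ≠ z) :
    Fkey x y z ≠ 0 := by
  intro hF
  have hna : 0 < ‖z - y‖ := by
    rw [norm_pos_iff, sub_ne_zero]; exact (Ne.symm hyz)
  have hnb : 0 < ‖x - z‖ := by
    rw [norm_pos_iff, sub_ne_zero]; exact hxz
  have hnc : 0 < ‖y - x‖ := by
    rw [norm_pos_iff, sub_ne_zero]; exact (Ne.symm hxy)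
  have hna2 : ‖z - y‖^2 = (z 0 - y 0)^2 + (z 1 - y 1)^2 + (z 2 - y 2)^2 := by
    rw [EuclideanSpace.norm_eq, Real.sq_sqrt (by positivity)]
    simp [Fin.sum_univ_three, sq_abs, PiLp.sub_apply]
  have hnb2 : ‖x - z‖^2 = (x 0 - z 0)^2 + (x 1 - z 1)^2 + (x 2 - z 2)^2 := by
    rw [EuclideanSpace.norm_eq, Real.sq_sqrt (by positivity)]
    simp [Fin.sum_univ_three, sq_abs, PiLp.sub_apply]
  have hnc2 : ‖y - x‖^2 = (y 0 - x 0)^2 + (y 1 - x 1)^2 + (y 2 - x 2)^2 := by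
    rw [EuclideanSpace.norm_eq, Real.sq_sqrt (by positivity)]
    simp [Fin.sum_univ_three, sq_abs, PiLp.sub_apply]
  have h0 : Fkey x y z 0 = 0 := by rw [hF]; rfl
  have h1 : Fkey x y z 1 = 0 := by rw [hF]; rfl
  have h2 : Fkey x y z 2 = 0 := by rw [hF]; rfl
  simp only [Fkey, cross3, PiLp.add_apply, PiLp.smul_apply, PiLp.sub_apply, PiLp.toLp_apply,
    Matrix.cons_val_zero, Matrix.cons_val_one, Matrix.head_cons, Matrix.cons_val_two,
    Matrix.tail_cons, smul_eq_mul] at h0 h1 h2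
  exact key1 (z 0 - y 0) (z 1 - y 1) (z 2 - y 2)
    (x 0 - z 0) (x 1 - z 1) (x 2 - z 2)
    (y 0 - x 0) (y 1 - x 1) (y 2 - x 2)
    ‖z - y‖ ‖x - z‖ ‖y - x‖ hna hnb hnc hna2 hnb2 hnc2
    (by ring) (by ring) (by ring) h0 h1 h2
end
end

section
/- Let a, b be nonzero vectors in ℝ³ with a × b = 0 and a + b ≠ 0, and set c = -(a+b). Then the vectors a/|a| + b/|b| + c/|c| and |a|²b + |b|²a are nonzero and point in the same direction; that is, their inner product is positive. -/
open scoped InnerProductSpace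

noncomputable section

lemma coll3 (a b : E3) (ha : a ≠ 0) (hdeg : cross3 a b = 0) : ∃ t : ℝ, b = t • a := by
  have h0 : a 1 * b 2 - a 2 * b 1 = 0 := by
    have := congrArg (fun v : E3 => v 0) hdeg; simpa [cross3] using this
  have h1 : a 2 * b 0 - a 0 * b 2 = 0 := by
    have := congrArg (fun v : E3 => v 1) hdeg; simpa [cross3] using this
  have h2 : a 0 * b 1 - a 1 * b 0 = 0 := by
    have := congrArg (fun v : E3 => v 2) hdeg; simpa [cross3] using this
  have hex : ∃ i, a i ≠ 0 := by
    by_contra h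
    push_neg at h
    exact ha (by ext i; simp [h i])
  obtain ⟨i, hi⟩ := hex
  fin_cases i
  · have hi0 : a 0 ≠ 0 := hi
    refine ⟨b 0 / a 0, ?_⟩
    ext j; fin_cases j <;> simp [PiLp.smul_apply, smul_eq_mul, div_mul_eq_mul_div,
      eq_div_iff hi0] <;> nlinarith [h0, h1, h2]
  · have hi0 : a 1 ≠ 0 := hi
    refine ⟨b 1 / a 1, ?_⟩
    ext j; fin_cases j <;> simp [PiLp.smul_apply, smul_eq_mul, div_mul_eq_mul_div,
      eq_div_iff hi0] <;> nlinarith [h0, h1, h2]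
  · have hi0 : a 2 ≠ 0 := hi
    refine ⟨b 2 / a 2, ?_⟩
    ext j; fin_cases j <;> simp [PiLp.smul_apply, smul_eq_mul, div_mul_eq_mul_div,
      eq_div_iff hi0] <;> nlinarith [h0, h1, h2]

lemma aux3 (x r : ℝ) (hx : x ≠ 0) : x * (x * r)⁻¹ = r⁻¹ := by
  rw [mul_inv, ← mul_assoc, mul_inv_cancel₀ hx, one_mul]

lemma key3 (r t : ℝ) (hr : 0 < r) (ht : t ≠ 0) (ht1 : 1 + t ≠ 0) :
    0 < (r⁻¹ + t * (|t| * r)⁻¹ + (-(1+t)) * (|1+t| * r)⁻¹) * ((r^2*t + (|t| * r)^2) * r^2) := by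
  have hrn := inv_pos.mpr hr
  have hr4 := pow_pos hr 4
  rcases lt_trichotomy t 0 with hneg | h | hpos
  · have htn : -t ≠ 0 := by intro h; apply ht; linarith
    rcases lt_trichotomy (1+t) 0 with h1 | h1 | h1
    · have h1n : -(1+t) ≠ 0 := by intro h; apply ht1; linarith
      rw [abs_of_neg hneg, abs_of_neg h1,
        show t * (-t * r)⁻¹ = -(-t * (-t * r)⁻¹) from by ring, aux3 (-t) r htn,
        aux3 (-(1+t)) r h1n,
        show (r⁻¹ + - r⁻¹ + r⁻¹) * ((r^2*t + (-t * r)^2) * r^2)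
          = r⁻¹ * (r^4 * (t * (1+t))) from by ring]
      exact mul_pos hrn (mul_pos hr4 (mul_pos_of_neg_of_neg hneg h1))
    · exact absurd h1 ht1
    · rw [abs_of_neg hneg, abs_of_pos h1,
        show t * (-t * r)⁻¹ = -(-t * (-t * r)⁻¹) from by ring, aux3 (-t) r htn,
        show (-(1+t)) * ((1+t) * r)⁻¹ = -((1+t) * ((1+t) * r)⁻¹) from by ring,
        aux3 (1+t) r ht1,
        show (r⁻¹ + - r⁻¹ + - r⁻¹) * ((r^2*t + (-t * r)^2) * r^2)
          = r⁻¹ * (r^4 * (-(t * (1+t)))) from by ring]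
      have hm : t * (1+t) < 0 := mul_neg_of_neg_of_pos hneg h1
      exact mul_pos hrn (mul_pos hr4 (by linarith))
  · exact absurd h ht
  · have h1 : 0 < 1 + t := by linarith
    rw [abs_of_pos hpos, abs_of_pos h1, aux3 t r ht,
      show (-(1+t)) * ((1+t) * r)⁻¹ = -((1+t) * ((1+t) * r)⁻¹) from by ring,
      aux3 (1+t) r ht1,
      show (r⁻¹ + r⁻¹ + - r⁻¹) * ((r^2*t + (t * r)^2) * r^2)
        = r⁻¹ * (r^4 * (t * (1+t))) from by ring]
    exact mul_pos hrn (mul_pos hr4 (mul_pos hpos h1))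

theorem stmt6 (a b : E3) (ha : a ≠ 0) (hb : b ≠ 0) (hab : a + b ≠ 0)
    (hdeg : cross3 a b = 0) :
    (‖a‖⁻¹ • a + ‖b‖⁻¹ • b + ‖-(a + b)‖⁻¹ • (-(a + b))) ≠ 0 ∧
    (‖a‖ ^ 2 • b + ‖b‖ ^ 2 • a) ≠ 0 ∧
    0 < ⟪‖a‖⁻¹ • a + ‖b‖⁻¹ • b + ‖-(a + b)‖⁻¹ • (-(a + b)),
        ‖a‖ ^ 2 • b + ‖b‖ ^ 2 • a⟫_ℝ := by
  obtain ⟨t, hbt⟩ := coll3 a b ha hdeg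
  have ht : t ≠ 0 := by
    rintro rfl; simp at hbt; exact hb hbt
  have ht1 : 1 + t ≠ 0 := by
    rintro h
    apply hab
    rw [hbt]
    have : a + t • a = (1 + t) • a := by module
    rw [this, h, zero_smul]
  set r := ‖a‖ with hrdef
  have hr : 0 < r := norm_pos_iff.mpr ha
  have hnb : ‖b‖ = |t| * r := by rw [hbt, norm_smul, Real.norm_eq_abs]
  have hnc : ‖-(a + b)‖ = |1 + t| * r := by
    have : -(a + b) = (-(1 + t)) • a := by rw [hbt]; module
    rw [this, norm_smul, Real.norm_eq_abs, abs_neg]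
  have hv1 : ‖a‖⁻¹ • a + ‖b‖⁻¹ • b + ‖-(a + b)‖⁻¹ • (-(a + b))
      = (r⁻¹ + t * (|t| * r)⁻¹ + (-(1+t)) * (|1+t| * r)⁻¹) • a := by
    rw [hnb, hnc, hbt]
    module
  have hv2 : ‖a‖ ^ 2 • b + ‖b‖ ^ 2 • a = (r^2*t + (|t| * r)^2) • a := by
    rw [hnb, hbt]
    module
  have hinner : ⟪‖a‖⁻¹ • a + ‖b‖⁻¹ • b + ‖-(a + b)‖⁻¹ • (-(a + b)),
      ‖a‖ ^ 2 • b + ‖b‖ ^ 2 • a⟫_ℝ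
      = (r⁻¹ + t * (|t| * r)⁻¹ + (-(1+t)) * (|1+t| * r)⁻¹) * ((r^2*t + (|t| * r)^2) * r^2) := by
    rw [hv1, hv2, real_inner_smul_left, real_inner_smul_right,
      real_inner_self_eq_norm_sq]
  have hpos : 0 < ⟪‖a‖⁻¹ • a + ‖b‖⁻¹ • b + ‖-(a + b)‖⁻¹ • (-(a + b)),
      ‖a‖ ^ 2 • b + ‖b‖ ^ 2 • a⟫_ℝ := by
    rw [hinner]; exact key3 r t hr ht ht1
  refine ⟨?_, ?_, hpos⟩
  · intro h; rw [h] at hpos; simp at hpos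
  · intro h; rw [h] at hpos; simp at hpos
end
end

section
/- Let a, b be purely imaginary quaternions with a, b, a+b all nonzero. Then Im((h(-a) - 1)·conj(h(b) - 1)) = C·(|a|²b + |b|²a + a×b), where C = 4/((1+|a|²)(1+|b|²)) > 0. In particular this imaginary part is a positive scalar multiple of |a|²b + |b|²a + a×b. -/
set_option maxHeartbeats 2000000

open scoped InnerProductSpace

noncomputable section

/-- The imaginary part of a quaternion, as a vector in ℝ³. -/
def im3 (q : Quaternion ℝ) : E3 := WithLp.toLp 2 ![q.imI, q.imJ, q.imK]

/-- The quaternion with given real part and imaginary part. -/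
def mkQ (r : ℝ) (v : E3) : Quaternion ℝ := ⟨r, v 0, v 1, v 2⟩

/-- Inverse stereographic projection from -1, applied to a quaternion q. -/
def hmap (q : Quaternion ℝ) : Quaternion ℝ :=
  (((1 - ‖q‖ ^ 2) / (1 + ‖q‖ ^ 2) : ℝ) : Quaternion ℝ) + ((2 / (1 + ‖q‖ ^ 2) : ℝ)) • q

theorem stmt11 (a b : Quaternion ℝ) (ha0 : a.re = 0) (hb0 : b.re = 0)
    (ha : a ≠ 0) (hb : b ≠ 0) (hab : a + b ≠ 0) :
    0 < 4 / ((1 + ‖a‖ ^ 2) * (1 + ‖b‖ ^ 2)) ∧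
    im3 ((hmap (-a) - 1) * star (hmap b - 1)) =
      (4 / ((1 + ‖a‖ ^ 2) * (1 + ‖b‖ ^ 2))) •
        (‖a‖ ^ 2 • im3 b + ‖b‖ ^ 2 • im3 a + cross3 (im3 a) (im3 b)) := by
  have hA : (0:ℝ) < 1 + ‖a‖ ^ 2 := by positivity
  have hB : (0:ℝ) < 1 + ‖b‖ ^ 2 := by positivity
  refine ⟨by positivity, ?_⟩
  simp only [hmap, norm_neg]
  generalize hAg : ‖a‖ ^ 2 = A at *
  generalize hBg : ‖b‖ ^ 2 = B at *
  have hA0 : (1 + A) ≠ 0 := ne_of_gt hA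
  have hB0 : (1 + B) ≠ 0 := ne_of_gt hB
  ext i
  fin_cases i <;>
  · simp only [im3, cross3, PiLp.smul_apply, PiLp.add_apply, smul_eq_mul, PiLp.toLp_apply, Fin.isValue, Fin.zero_eta, Fin.mk_one, Fin.reduceFinMk,
      Quaternion.imI_mul, Quaternion.imJ_mul, Quaternion.imK_mul,
      Quaternion.re_sub, Quaternion.imI_sub, Quaternion.imJ_sub, Quaternion.imK_sub,
      Quaternion.re_add, Quaternion.imI_add, Quaternion.imJ_add, Quaternion.imK_add,
      Quaternion.re_star, Quaternion.imI_star, Quaternion.imJ_star, Quaternion.imK_star,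
      Quaternion.re_smul, Quaternion.imI_smul, Quaternion.imJ_smul, Quaternion.imK_smul,
      Quaternion.re_coe, Quaternion.imI_coe, Quaternion.imJ_coe, Quaternion.imK_coe,
      Quaternion.re_one, Quaternion.imI_one, Quaternion.imJ_one, Quaternion.imK_one,
      Quaternion.re_neg, Quaternion.imI_neg, Quaternion.imJ_neg, Quaternion.imK_neg,
      ha0, hb0, Matrix.cons_val_zero, Matrix.cons_val_one, Matrix.head_cons,
      Matrix.cons_val_two, Matrix.tail_cons]
    field_simp
    ring
end
end

section
/- The key map F: Conf₃(ℝ³) → ℝ³ \ {0}, F(x,y,z) = a/|a| + b/|b| + c/|c| + (b×c)/(|b||c|) + (c×a)/(|c||a|) + (a×b)/(|a||b|) with a = z-y, b = x-z, c = y-x, is equivariant under orientation-preserving isometries of ℝ³: for any φ = (translation by v) ∘ (rotation R), F(φ(x), φ(y), φ(z)) = R(F(x,y,z)). -/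
open scoped InnerProductSpace

noncomputable section

lemma inner_cross3 (a b c : E3) :
    ⟪cross3 a b, c⟫_ℝ = Matrix.det (Matrix.of ![(a : Fin 3 → ℝ), b, c]) := by
  simp [cross3, PiLp.inner_apply, Fin.sum_univ_three, Matrix.det_fin_three]
  ring

lemma cross3_map (R : E3 ≃ₗᵢ[ℝ] E3)
    (hdet : LinearMap.det (R.toLinearEquiv : E3 →ₗ[ℝ] E3) = 1)
    (a b : E3) : cross3 (R a) (R b) = R (cross3 a b) := by
  set bb := (PiLp.basisFun 2 ℝ (Fin 3))
  set A := LinearMap.toMatrix bb bb (R.toLinearEquiv : E3 →ₗ[ℝ] E3) with hA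
  have hAdet : A.det = 1 := by rw [hA, LinearMap.det_toMatrix]; exact hdet
  have hmul : ∀ (u : E3) (i : Fin 3), (R u) i = ∑ k, A i k * u k := by
    intro u i
    have := LinearMap.toMatrix_mulVec_repr bb bb (R.toLinearEquiv : E3 →ₗ[ℝ] E3) u
    have h2 := congrFun this i
    simpa [Matrix.mulVec, dotProduct, bb] using h2.symm
  have key : ∀ (c : E3), ⟪cross3 (R a) (R b), R c⟫_ℝ = ⟪R (cross3 a b), R c⟫_ℝ := by
    intro c
    rw [R.inner_map_map, inner_cross3, inner_cross3]
    have : (Matrix.of ![((R a : E3) : Fin 3 → ℝ), R b, R c]) =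
        Matrix.of ![(a : Fin 3 → ℝ), b, c] * A.transpose := by
      ext i j
      fin_cases i <;>
        simp [Matrix.mul_apply, hmul, Matrix.transpose_apply, mul_comm]
    rw [this, Matrix.det_mul, Matrix.det_transpose, hAdet, mul_one]
  apply ext_inner_right ℝ
  intro u
  have := key (R.symm u)
  simpa using this

theorem stmt14 (R : E3 ≃ₗᵢ[ℝ] E3)
    (hdet : LinearMap.det (R.toLinearEquiv : E3 →ₗ[ℝ] E3) = 1) (v : E3)
    (x y z : E3) (hxy : x ≠ y) (hyz : y ≠ z) (hxz : x ≠ z) :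
    Fkey (R x + v) (R y + v) (R z + v) = R (Fkey x y z) := by

  have hd : ∀ p q : E3, (R p + v) - (R q + v) = R (p - q) := by
    intro p q; rw [add_sub_add_right_eq_sub, ← map_sub]
  simp only [Fkey, hd, R.norm_map, cross3_map R hdet, ← map_smul, ← map_add]
end
end
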